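/- Holomorphic dependence on the deformation parameter (Remark after Theorem 1.11): Define c₀(ℏ) = 1 and cₙ(ℏ) = ℏⁿ / ∏_{j=0}^{n−1}(1 + j·ℏ) for n ≥ 1, and let 𝒟 := ℂ \ ({0} ∪ {−1/k : k ∈ ℕ, k ≥ 1}). Then for all entire functions g, g̃ : ℂ → ℂ and every fixed w ∈ ℂ, the series ∑_{n=0}^∞ (cₙ(ℏ)/n!)·(w² − 1)ⁿ·g⁽ⁿ⁾(w)·g̃⁽ⁿ⁾(w) converges for every ℏ ∈ 𝒟, and the function ℏ ↦ ∑_{n=0}^∞ (cₙ(ℏ)/n!)·(w² − 1)ⁿ·g⁽ⁿ⁾(w)·g̃⁽ⁿ⁾(w) is holomorphic (complex differentiable) on the open set 𝒟. -/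

import Mathlib

open scoped BigOperators

/-- The coefficients `c_n(ℏ)` of the Wick star product:
`c_0(ℏ) = 1` and `c_n(ℏ) = ℏⁿ / ∏_{j=0}^{n-1} (1 + jℏ)` for `n ≥ 1`. -/
noncomputable def starCoeff (ℏ : ℂ) (n : ℕ) : ℂ :=
  if n = 0 then 1 else ℏ ^ n / ∏ j ∈ Finset.range n, (1 + (j : ℂ) * ℏ)

/-- The deformation domain `𝒟 = ℂ \ {0, -1, -1/2, -1/3, ...}`. -/
def deformationDomain : Set ℂ :=
  {ℏ : ℂ | ℏ ≠ 0 ∧ ∀ k : ℕ, 1 ≤ k → ℏ ≠ -(1 / (k : ℂ))}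

/-- Cauchy-type estimate for entire functions, from convergence of the Taylor series. -/
lemma StarAux.cauchy_bound (g : ℂ → ℂ) (hg : Differentiable ℂ g) (w : ℂ) (R : ℝ) (hR : 0 < R) :
    ∃ M : ℝ, 0 ≤ M ∧ ∀ n : ℕ, ‖iteratedDeriv n g w‖ ≤ n.factorial * M / R ^ n := by
  have h := (Complex.hasSum_taylorSeries_of_entire hg w (w + R)).summable
  have hn : Summable (fun n : ℕ =>
      ‖(n.factorial : ℂ)⁻¹ • ((w : ℂ) + R - w) ^ n • iteratedDeriv n g w‖) := h.norm
  refine ⟨∑' n, ‖(n.factorial : ℂ)⁻¹ • ((w : ℂ) + R - w) ^ n • iteratedDeriv n g w‖,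
    tsum_nonneg fun n => norm_nonneg _, fun n => ?_⟩
  have hle := Summable.le_tsum hn n (fun j _ => norm_nonneg _)
  have hsimp : ‖(n.factorial : ℂ)⁻¹ • ((w : ℂ) + R - w) ^ n • iteratedDeriv n g w‖
      = (n.factorial : ℝ)⁻¹ * R ^ n * ‖iteratedDeriv n g w‖ := by
    simp [norm_smul, Complex.norm_natCast, abs_of_pos hR, mul_assoc]
  rw [hsimp] at hle
  have hfpos : (0:ℝ) < n.factorial := by positivity
  rw [le_div_iff₀ (by positivity)]
  calc ‖iteratedDeriv n g w‖ * R ^ n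
      = (n.factorial : ℝ) * ((n.factorial : ℝ)⁻¹ * R ^ n * ‖iteratedDeriv n g w‖) := by
        field_simp
    _ ≤ _ := mul_le_mul_of_nonneg_left hle hfpos.le

/-- On a small closed ball inside the deformation domain, the factors `1 + jℏ`
grow at least linearly in `j`, uniformly. -/
lemma StarAux.ball_bound {ℏ₀ : ℂ} (h : ℏ₀ ∈ deformationDomain) :
    ∃ r > 0, ∃ m > 0, ∀ ℏ ∈ Metric.closedBall ℏ₀ r, ∀ j : ℕ,
      m * (j + 1) ≤ ‖1 + (j : ℂ) * ℏ‖ := by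
  obtain ⟨h0, hk⟩ := h
  set δ : ℝ := ‖ℏ₀‖ with hδ
  have hδpos : 0 < δ := by simpa [hδ] using norm_pos_iff.mpr h0
  have hfac : ∀ j : ℕ, (1 + (j : ℂ) * ℏ₀) ≠ 0 := by
    intro j hj
    rcases Nat.eq_zero_or_pos j with rfl | hj1
    · simp at hj
    · apply hk j hj1
      have hjne : (j : ℂ) ≠ 0 := Nat.cast_ne_zero.mpr hj1.ne'
      field_simp at hj ⊢
      linear_combination hj
  set J : ℕ := ⌈4 / δ⌉₊ with hJ
  set f : ℕ → ℝ := fun j => ‖1 + (j : ℂ) * ℏ₀‖ / (2 * (j + 1)) with hf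
  have hfpos : ∀ j, 0 < f j := by
    intro j
    have : 0 < ‖1 + (j : ℂ) * ℏ₀‖ := norm_pos_iff.mpr (hfac j)
    positivity
  have hne : (Finset.range (J + 1)).Nonempty := Finset.nonempty_range_add_one
  set F : ℝ := (Finset.range (J + 1)).inf' hne f with hF
  have hFpos : 0 < F := by
    rw [hF, Finset.lt_inf'_iff]
    exact fun j _ => hfpos j
  refine ⟨min (δ / 2) F, lt_min (by positivity) hFpos, min (δ / 8) F,
    lt_min (by positivity) hFpos, ?_⟩
  intro ℏ hℏ j
  rw [Metric.mem_closedBall, dist_eq_norm] at hℏ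
  have hr2 : ‖ℏ - ℏ₀‖ ≤ δ / 2 := hℏ.trans (min_le_left _ _)
  have hrF : ‖ℏ - ℏ₀‖ ≤ F := hℏ.trans (min_le_right _ _)
  have hm1 : min (δ / 8) F ≤ δ / 8 := min_le_left _ _
  have hm2 : min (δ / 8) F ≤ F := min_le_right _ _
  by_cases hj : j ≤ J
  · have hjF : F ≤ f j := Finset.inf'_le f (Finset.mem_range.mpr (by omega))
    have h1 : ‖1 + (j : ℂ) * ℏ₀‖ - (j : ℝ) * ‖ℏ - ℏ₀‖ ≤ ‖1 + (j : ℂ) * ℏ‖ := by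
      have h2 := norm_sub_norm_le (1 + (j : ℂ) * ℏ₀) ((j : ℂ) * (ℏ₀ - ℏ))
      have e : (1 + (j : ℂ) * ℏ₀) - (j : ℂ) * (ℏ₀ - ℏ) = 1 + (j : ℂ) * ℏ := by ring
      rw [e] at h2
      simpa [norm_mul, Complex.norm_natCast, norm_sub_rev ℏ₀ ℏ] using h2
    have hfj : f j = ‖1 + (j : ℂ) * ℏ₀‖ / (2 * (j + 1)) := rfl
    have hNpos : 0 < ‖1 + (j : ℂ) * ℏ₀‖ := norm_pos_iff.mpr (hfac j)
    have hjnn : (0:ℝ) ≤ (j : ℝ) := Nat.cast_nonneg j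
    have hdF : ‖ℏ - ℏ₀‖ ≤ f j := hrF.trans hjF
    have hmf : min (δ / 8) F ≤ f j := hm2.trans hjF
    rw [hfj] at hdF hmf
    rw [le_div_iff₀ (by positivity)] at hdF hmf
    nlinarith [norm_nonneg (ℏ - ℏ₀), mul_le_mul_of_nonneg_left hdF hjnn]
  · push_neg at hj
    have hj1 : 1 ≤ j := by omega
    have hjδ : (4:ℝ) ≤ (j:ℝ) * δ := by
      have h4 : (4/δ : ℝ) ≤ (J : ℝ) := Nat.le_ceil _
      have hJj : (J:ℝ) ≤ (j:ℝ) := by exact_mod_cast hj.le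
      rw [div_le_iff₀ hδpos] at h4
      nlinarith
    have hℏn : δ / 2 ≤ ‖ℏ‖ := by
      have := norm_sub_norm_le ℏ₀ (ℏ₀ - ℏ)
      simp only [sub_sub_cancel] at this
      rw [norm_sub_rev] at this
      linarith
    have h1 : (j:ℝ) * ‖ℏ‖ - 1 ≤ ‖1 + (j : ℂ) * ℏ‖ := by
      have h2 := norm_sub_norm_le ((j : ℂ) * ℏ) (-1)
      have e : ((j : ℂ) * ℏ) - (-1) = 1 + (j : ℂ) * ℏ := by ring
      rw [e] at h2
      simpa [norm_mul, Complex.norm_natCast] using h2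
    have hjr : (1:ℝ) ≤ (j:ℝ) := by exact_mod_cast hj1
    nlinarith [mul_le_mul_of_nonneg_left hℏn (le_trans (by norm_num) hjr : (0:ℝ) ≤ (j:ℝ))]

/-- Lower bound on the denominator product. -/
lemma StarAux.prod_lower {ℏ : ℂ} {m : ℝ} (hm : 0 < m)
    (h : ∀ j : ℕ, m * (j + 1) ≤ ‖1 + (j : ℂ) * ℏ‖) (n : ℕ) :
    m ^ n * n.factorial ≤ ‖∏ j ∈ Finset.range n, (1 + (j : ℂ) * ℏ)‖ := by
  rw [norm_prod]
  have e : (m ^ n * n.factorial : ℝ) = ∏ j ∈ Finset.range n, (m * ((j:ℝ) + 1)) := by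
    rw [Finset.prod_mul_distrib, Finset.prod_const, Finset.card_range]
    congr 1
    induction n with
    | zero => simp
    | succ k ih => rw [Finset.prod_range_succ, ← ih]; push_cast [Nat.factorial_succ]; ring
  rw [e]
  exact Finset.prod_le_prod (fun j _ => by positivity) (fun j _ => h j)

/-- Norm bound for the star-product coefficients. -/
lemma StarAux.coeff_bound {ℏ : ℂ} {m : ℝ} (hm : 0 < m)
    (h : ∀ j : ℕ, m * (j + 1) ≤ ‖1 + (j : ℂ) * ℏ‖) (n : ℕ) :
    ‖starCoeff ℏ n‖ ≤ ‖ℏ‖ ^ n / (m ^ n * n.factorial) := by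
  rcases Nat.eq_zero_or_pos n with rfl | hn
  · simp [starCoeff]
  · have hn0 : n ≠ 0 := hn.ne'
    rw [starCoeff, if_neg hn0, norm_div, norm_pow]
    have hlb := StarAux.prod_lower hm h n
    have hpos : (0:ℝ) < m ^ n * n.factorial := by positivity
    exact div_le_div_of_nonneg_left (by positivity) hpos hlb

/-- Holomorphic dependence on the deformation parameter: for entire `g, g̃`
and fixed `w ∈ ℂ`, the series `∑ (c_n(ℏ)/n!) (w²-1)ⁿ g⁽ⁿ⁾(w) g̃⁽ⁿ⁾(w)` converges
for every `ℏ ∈ 𝒟` and defines a holomorphic function of `ℏ` on `𝒟`. -/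
theorem star_series_holomorphic_in_hbar
    (g g' : ℂ → ℂ) (hg : Differentiable ℂ g) (hg' : Differentiable ℂ g') (w : ℂ) :
    (∀ ℏ ∈ deformationDomain, Summable (fun n : ℕ =>
      (starCoeff ℏ n / (n.factorial : ℂ)) * (w ^ 2 - 1) ^ n *
        iteratedDeriv n g w * iteratedDeriv n g' w)) ∧
    DifferentiableOn ℂ
      (fun ℏ : ℂ => ∑' n : ℕ,
        (starCoeff ℏ n / (n.factorial : ℂ)) * (w ^ 2 - 1) ^ n *
          iteratedDeriv n g w * iteratedDeriv n g' w)
      deformationDomain := by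
  set f : ℕ → ℂ → ℂ := fun n ℏ =>
    (starCoeff ℏ n / (n.factorial : ℂ)) * (w ^ 2 - 1) ^ n *
      iteratedDeriv n g w * iteratedDeriv n g' w with hfdef
  -- the key uniform estimate on small closed balls in the domain
  have key : ∀ ℏ₀ ∈ deformationDomain, ∃ r > 0, ∃ m > 0,
      (∀ ℏ ∈ Metric.closedBall ℏ₀ r, ∀ j : ℕ, m * (j + 1) ≤ ‖1 + (j : ℂ) * ℏ‖) ∧
      ∃ u : ℕ → ℝ, Summable u ∧
        ∀ n, ∀ ℏ ∈ Metric.closedBall ℏ₀ r, ‖f n ℏ‖ ≤ u n := by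
    intro ℏ₀ h₀
    obtain ⟨r, hr, m, hm, hball⟩ := StarAux.ball_bound h₀
    refine ⟨r, hr, m, hm, hball, ?_⟩
    set A : ℝ := ‖w ^ 2 - 1‖ with hA
    set B : ℝ := ‖ℏ₀‖ + r with hB
    have hBpos : 0 < B := by
      have : 0 ≤ ‖ℏ₀‖ := norm_nonneg _
      simp only [hB]; linarith
    have hAnn : 0 ≤ A := norm_nonneg _
    set R : ℝ := Real.sqrt (2 * A * B / m + 1) with hR
    have hRpos : 0 < R := Real.sqrt_pos.mpr (by positivity)
    have hR2 : R ^ 2 = 2 * A * B / m + 1 := Real.sq_sqrt (by positivity)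
    obtain ⟨M₁, hM₁nn, hM₁⟩ := StarAux.cauchy_bound g hg w R hRpos
    obtain ⟨M₂, hM₂nn, hM₂⟩ := StarAux.cauchy_bound g' hg' w R hRpos
    have hhalf : A * B / (m * R ^ 2) ≤ 1 / 2 := by
      have hmR : m * R ^ 2 = 2 * A * B + m := by
        rw [hR2]; field_simp
      rw [hmR, div_le_div_iff₀ (by positivity) (by norm_num)]
      nlinarith
    refine ⟨fun n => M₁ * M₂ * (1 / 2) ^ n,
      (summable_geometric_of_lt_one (by norm_num) (by norm_num)).mul_left _, fun n ℏ hℏ => ?_⟩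
    have hℏB : ‖ℏ‖ ≤ B := by
      rw [Metric.mem_closedBall, dist_eq_norm] at hℏ
      calc ‖ℏ‖ = ‖ℏ₀ + (ℏ - ℏ₀)‖ := by ring_nf
        _ ≤ ‖ℏ₀‖ + ‖ℏ - ℏ₀‖ := norm_add_le _ _
        _ ≤ B := by simp only [hB]; linarith
    have hcb : ‖starCoeff ℏ n‖ ≤ B ^ n / (m ^ n * n.factorial) := by
      refine (StarAux.coeff_bound hm (hball ℏ hℏ) n).trans ?_
      gcongr
    have hfn : ‖f n ℏ‖ = ‖starCoeff ℏ n‖ / (n.factorial : ℝ) * A ^ n *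
        ‖iteratedDeriv n g w‖ * ‖iteratedDeriv n g' w‖ := by
      simp [hfdef, norm_mul, norm_div, norm_pow, Complex.norm_natCast, hA]
    rw [hfn]
    have hfacpos : (0:ℝ) < n.factorial := by positivity
    calc ‖starCoeff ℏ n‖ / (n.factorial : ℝ) * A ^ n *
          ‖iteratedDeriv n g w‖ * ‖iteratedDeriv n g' w‖
        ≤ (B ^ n / (m ^ n * n.factorial)) / (n.factorial : ℝ) * A ^ n *
          (n.factorial * M₁ / R ^ n) * (n.factorial * M₂ / R ^ n) := by
          gcongr
          exacts [hM₁ n, hM₂ n]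
      _ = M₁ * M₂ * (A * B / (m * R ^ 2)) ^ n := by
          have hRn : ((R ^ 2) ^ n : ℝ) = R ^ n * R ^ n := by
            rw [← pow_add, ← two_mul, pow_mul]
          rw [div_pow, mul_pow, mul_pow, hRn]
          field_simp
      _ ≤ M₁ * M₂ * (1 / 2) ^ n := by
          gcongr
  constructor
  · intro ℏ hℏ
    obtain ⟨r, hr, m, hm, hball, u, hu, hbound⟩ := key ℏ hℏ
    exact Summable.of_norm_bounded hu
      (fun n => hbound n ℏ (Metric.mem_closedBall_self hr.le))
  · intro ℏ₀ h₀
    obtain ⟨r, hr, m, hm, hball, u, hu, hbound⟩ := key ℏ₀ h₀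
    -- each term is differentiable on the ball
    have hterm : ∀ n : ℕ, DifferentiableOn ℂ (f n) (Metric.ball ℏ₀ r) := by
      intro n
      rcases Nat.eq_zero_or_pos n with rfl | hn
      · simp only [hfdef]
        simp [starCoeff]
      · have hn0 : n ≠ 0 := hn.ne'
        have heq : ∀ ℏ, starCoeff ℏ n = ℏ ^ n / ∏ j ∈ Finset.range n, (1 + (j : ℂ) * ℏ) := by
          intro ℏ; rw [starCoeff, if_neg hn0]
        have hprod : Differentiable ℂ (fun ℏ : ℂ => ∏ j ∈ Finset.range n, (1 + (j : ℂ) * ℏ)) :=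
          Differentiable.fun_finset_prod fun j _ =>
            (differentiable_const _).add ((differentiable_const _).mul differentiable_id)
        have hne : ∀ ℏ ∈ Metric.ball ℏ₀ r,
            (∏ j ∈ Finset.range n, (1 + (j : ℂ) * ℏ)) ≠ 0 := by
          intro ℏ hℏ
          have hlb := StarAux.prod_lower hm (hball ℏ (Metric.ball_subset_closedBall hℏ)) n
          have : (0:ℝ) < m ^ n * n.factorial := by positivity
          exact norm_pos_iff.mp (lt_of_lt_of_le this hlb)
        have hco : DifferentiableOn ℂ (fun ℏ : ℂ => starCoeff ℏ n) (Metric.ball ℏ₀ r) := by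
          simp only [heq]
          exact DifferentiableOn.div (differentiable_pow n).differentiableOn
            hprod.differentiableOn hne
        simp only [hfdef]
        exact (((hco.div_const _).mul_const _).mul_const _).mul_const _
    have htu : TendstoUniformlyOn (fun N ℏ => ∑ n ∈ Finset.range N, f n ℏ)
        (fun ℏ => ∑' n, f n ℏ) Filter.atTop (Metric.ball ℏ₀ r) :=
      tendstoUniformlyOn_tsum_nat hu fun n ℏ hℏ =>
        hbound n ℏ (Metric.ball_subset_closedBall hℏ)
    have hdiff : DifferentiableOn ℂ (fun ℏ => ∑' n, f n ℏ) (Metric.ball ℏ₀ r) :=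
      htu.tendstoLocallyUniformlyOn.differentiableOn
        (Filter.Eventually.of_forall fun N =>
          DifferentiableOn.fun_sum fun n _ => hterm n)
        Metric.isOpen_ball
    exact ((hdiff.differentiableAt
      (Metric.isOpen_ball.mem_nhds (Metric.mem_ball_self hr))).differentiableWithinAt)
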